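/- There exists a constant C, depending only on the dimension d and on c₀, such that for every R > 0, every truncation triple (η, a, v_R) for radius R, every convex open set Ω ⊆ ℝᵈ with B_R ⊆ Ω ⊆ B_{2R}, and every C¹ function v : ℝᵈ → ℝ with square-integrable gradient, one has ‖v − v_R − a‖_{L²(Ω)} ≤ C R ‖∇v − ∇v_R‖_{L²(Ω∖B_{R/2})}. (Note v − v_R − a and ∇v − ∇v_R both vanish on B_{R/2}.) -/

import Mathlib

open MeasureTheory Metric RealInnerProductSpace

noncomputable section

/-- Euclidean space `ℝᵈ`. -/
abbrev Ed (d : ℕ) := EuclideanSpace ℝ (Fin d)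

/-- The `L²` norm of a (possibly vector-valued) function over a set `A ⊆ ℝᵈ`. -/
def l2On {d : ℕ} {F : Type*} [NormedAddCommGroup F] (A : Set (Ed d)) (w : Ed d → F) : ℝ :=
  Real.sqrt (∫ x in A, ‖w x‖ ^ 2)

/-- The annulus `B_R ∖ B_{R/2}` around the origin. -/
def annulus (d : ℕ) (R : ℝ) : Set (Ed d) :=
  closedBall (0 : Ed d) R \ closedBall (0 : Ed d) (R / 2)

/-- A `C¹` cut-off function `η` for the truncation operator at radius `R`:
`0 ≤ η ≤ 1`, `η = 1` on `B_{R/2}`, `η = 0` outside `B_R`, `|∇η| ≤ c₀/R`. -/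
structure IsCutoff (d : ℕ) (c₀ R : ℝ) (η : Ed d → ℝ) : Prop where
  smooth : ContDiff ℝ 1 η
  nonneg : ∀ x, 0 ≤ η x
  le_one : ∀ x, η x ≤ 1
  eq_one : ∀ x ∈ closedBall (0 : Ed d) (R / 2), η x = 1
  eq_zero : ∀ x ∉ closedBall (0 : Ed d) R, η x = 0
  grad_le : ∀ x, ‖gradient η x‖ ≤ c₀ / R

/-- The average `a = ⨍_{B_R ∖ B_{R/2}} v` of `v` over the annulus. -/
def truncAvg (d : ℕ) (R : ℝ) (v : Ed d → ℝ) : ℝ :=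
  ⨍ x in annulus d R, v x

/-- The truncated function `v_R = η ⬝ (v − a)`. -/
def truncFun {d : ℕ} (η v : Ed d → ℝ) (a : ℝ) : Ed d → ℝ :=
  fun x => η x * (v x - a)

/-- Cauchy–Schwarz on `Ioc 0 1`. -/
lemma cs_aux (f : ℝ → ℝ) (hf : Continuous f) (hnn : ∀ t, 0 ≤ f t) :
    (∫ t in Set.Ioc (0:ℝ) 1, f t) ^ 2 ≤ ∫ t in Set.Ioc (0:ℝ) 1, f t ^ 2 := by
  haveI : IsFiniteMeasure (volume.restrict (Set.Ioc (0:ℝ) 1)) :=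
    ⟨by rw [Measure.restrict_apply_univ]; simp⟩
  obtain ⟨C, hC⟩ := (isCompact_Icc (a := (0:ℝ)) (b := 1)).exists_bound_of_continuousOn
    hf.continuousOn
  have hmem : MemLp f (ENNReal.ofReal 2) (volume.restrict (Set.Ioc (0:ℝ) 1)) := by
    refine MemLp.of_bound hf.aestronglyMeasurable.restrict C ?_
    exact (ae_restrict_iff' measurableSet_Ioc).2
      (Filter.Eventually.of_forall fun t ht => hC t (Set.Ioc_subset_Icc_self ht))
  have hone : MemLp (fun _ : ℝ => (1:ℝ)) (ENNReal.ofReal 2)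
      (volume.restrict (Set.Ioc (0:ℝ) 1)) := memLp_const 1
  have hconj : Real.HolderConjugate 2 2 := Real.HolderConjugate.two_two
  have h := integral_mul_le_Lp_mul_Lq_of_nonneg hconj
    (Filter.Eventually.of_forall hnn) (Filter.Eventually.of_forall fun _ => zero_le_one)
    hmem hone
  simp only [mul_one] at h
  have hint1 : ∫ t in Set.Ioc (0:ℝ) 1, (1:ℝ) ^ (2:ℝ) = 1 := by simp
  rw [hint1] at h
  have h1 : (1:ℝ) ^ (1/(2:ℝ)) = 1 := Real.one_rpow _
  rw [h1, mul_one] at h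
  have hA : 0 ≤ ∫ t in Set.Ioc (0:ℝ) 1, f t ^ (2:ℝ) :=
    integral_nonneg fun t => Real.rpow_nonneg (hnn t) _
  have hfin : (∫ t in Set.Ioc (0:ℝ) 1, f t) ^ 2
      ≤ ((∫ t in Set.Ioc (0:ℝ) 1, f t ^ (2:ℝ)) ^ (1/(2:ℝ))) ^ 2 := by
    apply pow_le_pow_left₀ (integral_nonneg hnn) h 2
  calc (∫ t in Set.Ioc (0:ℝ) 1, f t) ^ 2
      ≤ ((∫ t in Set.Ioc (0:ℝ) 1, f t ^ (2:ℝ)) ^ (1/(2:ℝ))) ^ 2 := hfin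
    _ = ∫ t in Set.Ioc (0:ℝ) 1, f t ^ (2:ℝ) := by
        rw [← Real.rpow_natCast ((∫ t in Set.Ioc (0:ℝ) 1, f t ^ (2:ℝ)) ^ (1/(2:ℝ))) 2,
          ← Real.rpow_mul hA]
        norm_num
    _ = ∫ t in Set.Ioc (0:ℝ) 1, f t ^ 2 := by
        apply integral_congr_ae
        refine Filter.Eventually.of_forall fun t => ?_
        show f t ^ (2:ℝ) = f t ^ (2:ℕ)
        rw [← Real.rpow_natCast (f t) 2]
        norm_num

set_option maxHeartbeats 1000000 in
lemma key_poincare (d : ℕ) (hd : 1 ≤ d) {R : ℝ} (hR : 0 < R) {Ω : Set (Ed d)}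
    (hconv : Convex ℝ Ω) (hmeas : MeasurableSet Ω)
    (h0Ω : (0 : Ed d) ∈ Ω) (hΩB : Ω ⊆ closedBall (0 : Ed d) (2 * R))
    {w : Ed d → ℝ} (hw : ContDiff ℝ 1 w)
    (hw0 : ∀ x ∈ closedBall (0 : Ed d) (R / 2), w x = 0) :
    ∫ x in Ω, w x ^ 2
      ≤ 4 ^ d * (2 * R) ^ 2 * ∫ y in Ω \ closedBall (0 : Ed d) (R / 2), ‖fderiv ℝ w y‖ ^ 2 := by
  haveI : Nontrivial (Ed d) :=
    Module.nontrivial_of_finrank_pos (R := ℝ) (by rw [finrank_euclideanSpace_fin]; omega)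
  set F : Ed d → ℝ := fun y => ‖fderiv ℝ w y‖ ^ 2 with hF
  have hFcont : Continuous F := ((hw.continuous_fderiv one_ne_zero).norm.pow 2)
  have hFnn : ∀ y, 0 ≤ F y := fun y => sq_nonneg _
  set I : ℝ := ∫ y in Ω \ closedBall (0 : Ed d) (R / 2), F y with hI
  -- integrability of continuous functions on Ω
  have hIntOn : ∀ (f : Ed d → ℝ), Continuous f → IntegrableOn f Ω := fun f hf =>
    (hf.continuousOn.integrableOn_compact (isCompact_closedBall (0 : Ed d) (2*R))).mono_set hΩB
  have hInn : (0:ℝ) ≤ I :=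
    setIntegral_nonneg (hmeas.diff measurableSet_closedBall) fun y _ => hFnn y
  -- gradient vanishes on the open ball
  have hfz : ∀ y ∈ ball (0 : Ed d) (R/2), fderiv ℝ w y = 0 := by
    intro y hy
    have hev : w =ᶠ[nhds y] (fun _ => (0:ℝ)) :=
      Filter.eventuallyEq_of_mem (isOpen_ball.mem_nhds hy)
        (fun z hz => hw0 z (ball_subset_closedBall hz))
    rw [hev.fderiv_eq]
    exact fderiv_const_apply 0
  -- FTC along rays
  have hFTC : ∀ x : Ed d, w x = ∫ t in (0:ℝ)..1, (fderiv ℝ w (t • x)) x := by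
    intro x
    have hderiv : ∀ t : ℝ, HasDerivAt (fun s : ℝ => w (s • x)) ((fderiv ℝ w (t • x)) x) t := by
      intro t
      have h1 : HasFDerivAt w (fderiv ℝ w (t • x)) (t • x) :=
        (hw.differentiable one_ne_zero (t • x)).hasFDerivAt
      have h2 : HasDerivAt (fun s : ℝ => s • x) x t := by
        simpa using (hasDerivAt_id t).smul_const x
      exact h1.comp_hasDerivAt t h2
    have hcont : Continuous fun t : ℝ => (fderiv ℝ w (t • x)) x := by
      have h3 : Continuous fun t : ℝ => fderiv ℝ w (t • x) :=
        (hw.continuous_fderiv one_ne_zero).comp (continuous_id.smul continuous_const)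
      exact h3.clm_apply continuous_const
    have h4 := intervalIntegral.integral_eq_sub_of_hasDerivAt (fun t _ => hderiv t)
      (hcont.intervalIntegrable 0 1)
    rw [h4]
    have h5 : w ((0:ℝ) • x) = 0 := by
      rw [zero_smul]; exact hw0 0 (mem_closedBall_self (by linarith))
    rw [h5, one_smul, sub_zero]
  -- pointwise bound
  have hpt : ∀ x ∈ Ω, w x ^ 2 ≤ (2*R)^2 * ∫ t in Set.Icc (1/4:ℝ) 1, F (t • x) := by
    intro x hx
    have hxnorm : ‖x‖ ≤ 2 * R := by
      have := hΩB hx; rwa [mem_closedBall, dist_zero_right] at this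
    set h : ℝ → ℝ := fun t => ‖fderiv ℝ w (t • x)‖ with hh
    have hhcont : Continuous h :=
      ((hw.continuous_fderiv one_ne_zero).comp (continuous_id.smul continuous_const)).norm
    have hcont2 : Continuous fun t : ℝ => (fderiv ℝ w (t • x)) x :=
      ((hw.continuous_fderiv one_ne_zero).comp
        (continuous_id.smul continuous_const)).clm_apply continuous_const
    have h1 : |w x| ≤ (2*R) * ∫ t in Set.Ioc (0:ℝ) 1, h t := by
      rw [hFTC x]
      have ha : |∫ t in (0:ℝ)..1, (fderiv ℝ w (t • x)) x|
          ≤ ∫ t in (0:ℝ)..1, ‖(fderiv ℝ w (t • x)) x‖ := by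
        rw [← Real.norm_eq_abs]
        exact intervalIntegral.norm_integral_le_integral_norm (by norm_num)
      have hb : (∫ t in (0:ℝ)..1, ‖(fderiv ℝ w (t • x)) x‖)
          ≤ ∫ t in (0:ℝ)..1, (2*R) * h t := by
        apply intervalIntegral.integral_mono_on (by norm_num)
          (hcont2.norm.intervalIntegrable 0 1)
          ((continuous_const.mul hhcont).intervalIntegrable 0 1)
        intro t _
        calc ‖(fderiv ℝ w (t • x)) x‖ ≤ ‖fderiv ℝ w (t • x)‖ * ‖x‖ :=
              ContinuousLinearMap.le_opNorm _ _
          _ ≤ (2*R) * h t := by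
              rw [mul_comm]
              exact mul_le_mul_of_nonneg_right hxnorm (norm_nonneg _)
      have hc : (∫ t in (0:ℝ)..1, (2*R) * h t) = (2*R) * ∫ t in Set.Ioc (0:ℝ) 1, h t := by
        rw [intervalIntegral.integral_const_mul, intervalIntegral.integral_of_le (by norm_num)]
      linarith [ha.trans (hb.trans_eq hc)]
    have h2 : (∫ t in Set.Ioc (0:ℝ) 1, h t)^2 ≤ ∫ t in Set.Ioc (0:ℝ) 1, h t ^ 2 :=
      cs_aux h hhcont (fun t => norm_nonneg _)
    have h3 : (∫ t in Set.Ioc (0:ℝ) 1, h t ^ 2) = ∫ t in Set.Icc (1/4:ℝ) 1, F (t • x) := by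
      have heq : (fun t : ℝ => h t ^ 2) = fun t => F (t • x) := rfl
      rw [heq]
      refine setIntegral_eq_of_subset_of_ae_diff_eq_zero
        measurableSet_Ioc.nullMeasurableSet
        (fun t ht => ⟨lt_of_lt_of_le (by norm_num) ht.1, ht.2⟩) ?_
      refine Filter.Eventually.of_forall fun t ht => ?_
      obtain ⟨⟨ht0, ht1⟩, htn⟩ := ht
      have htlt : t < 1/4 := by
        by_contra hcon
        exact htn ⟨le_of_not_gt hcon, ht1⟩
      have : t • x ∈ ball (0 : Ed d) (R/2) := by
        rw [mem_ball_zero_iff, norm_smul, Real.norm_eq_abs, abs_of_pos ht0]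
        calc t * ‖x‖ ≤ t * (2*R) := mul_le_mul_of_nonneg_left hxnorm ht0.le
          _ < (1/4) * (2*R) := by
              apply mul_lt_mul_of_pos_right htlt (by linarith)
          _ = R/2 := by ring
      show F (t • x) = 0
      rw [hF]; simp [hfz _ this]
    have h4 : w x ^ 2 = |w x| ^ 2 := (sq_abs _).symm
    have h5 : |w x| ^ 2 ≤ ((2*R) * ∫ t in Set.Ioc (0:ℝ) 1, h t) ^ 2 :=
      pow_le_pow_left₀ (abs_nonneg _) h1 2
    have hhnn : (0:ℝ) ≤ ∫ t in Set.Ioc (0:ℝ) 1, h t :=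
      integral_nonneg fun t => norm_nonneg _
    calc w x ^ 2 = |w x| ^ 2 := h4
      _ ≤ ((2*R) * ∫ t in Set.Ioc (0:ℝ) 1, h t) ^ 2 := h5
      _ = (2*R)^2 * (∫ t in Set.Ioc (0:ℝ) 1, h t) ^ 2 := by ring
      _ ≤ (2*R)^2 * ∫ t in Set.Ioc (0:ℝ) 1, h t ^ 2 := by
          apply mul_le_mul_of_nonneg_left h2 (by positivity)
      _ = (2*R)^2 * ∫ t in Set.Icc (1/4:ℝ) 1, F (t • x) := by rw [h3]
  -- product integrability
  set μt := volume.restrict (Set.Icc (1/4:ℝ) 1) with hμt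
  have hprod : Integrable (Function.uncurry fun (x : Ed d) (t : ℝ) => F (t • x))
      ((volume.restrict Ω).prod μt) := by
    have hcontp : Continuous fun p : Ed d × ℝ => F (p.2 • p.1) :=
      hFcont.comp (continuous_snd.smul continuous_fst)
    have hIO : IntegrableOn (fun p : Ed d × ℝ => F (p.2 • p.1))
        (Ω ×ˢ Set.Icc (1/4:ℝ) 1) volume :=
      (hcontp.continuousOn.integrableOn_compact
        ((isCompact_closedBall (0:Ed d) (2*R)).prod isCompact_Icc)).mono_set
        (Set.prod_mono hΩB subset_rfl)
    rw [hμt, Measure.prod_restrict, ← Measure.volume_eq_prod]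
    exact hIO
  have hΨint : Integrable (fun x => ∫ t, F (t • x) ∂μt) (volume.restrict Ω) :=
    hprod.integral_prod_left
  have hinner_int : Integrable (fun t => ∫ x in Ω, F (t • x)) μt :=
    hprod.integral_prod_right
  -- step E
  have hE : ∫ x in Ω, w x ^ 2
      ≤ ∫ x in Ω, (2*R)^2 * ∫ t in Set.Icc (1/4:ℝ) 1, F (t • x) := by
    exact setIntegral_mono_on (hIntOn _ (hw.continuous.pow 2)) (hΨint.const_mul _) hmeas hpt
  -- swap
  have hswap : (∫ x in Ω, ∫ t, F (t • x) ∂μt)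
      = ∫ t, (∫ x in Ω, F (t • x)) ∂μt :=
    integral_integral_swap hprod
  -- inner bound
  have hG : ∀ t ∈ Set.Icc (1/4:ℝ) 1, (∫ x in Ω, F (t • x)) ≤ 4 ^ d * I := by
    intro t ht
    obtain ⟨htl, htr⟩ := ht
    have ht0 : (0:ℝ) < t := lt_of_lt_of_le (by norm_num) htl
    set K : Ed d → ℝ := Set.indicator (Ω \ ball (0:Ed d) (R/2)) F with hK
    have hKint : Integrable K := by
      rw [hK, integrable_indicator_iff (hmeas.diff measurableSet_ball)]
      exact (hIntOn F hFcont).mono_set Set.diff_subset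
    have hKnn : ∀ y, 0 ≤ K y := fun y => Set.indicator_nonneg (fun z _ => hFnn z) y
    have hle : ∀ x ∈ Ω, F (t • x) ≤ K (t • x) := by
      intro x hx
      by_cases hb : t • x ∈ ball (0:Ed d) (R/2)
      · have : F (t • x) = 0 := by rw [hF]; simp [hfz _ hb]
        rw [this]; exact hKnn _
      · have hxt : t • x ∈ Ω := by
          have hcomb := hconv h0Ω hx (by linarith : (0:ℝ) ≤ 1 - t) ht0.le (by ring)
          simpa using hcomb
        have hmem2 : t • x ∈ Ω \ ball (0:Ed d) (R/2) := ⟨hxt, hb⟩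
        rw [hK, Set.indicator_of_mem hmem2]
    have hKsmul : Integrable (fun x => K (t • x)) := hKint.comp_smul ht0.ne'
    have hcalc : ∫ x in Ω, F (t • x) ≤ ∫ x, K (t • x) := by
      calc ∫ x in Ω, F (t • x) ≤ ∫ x in Ω, K (t • x) := by
            apply setIntegral_mono_on
              (((hFcont.comp (continuous_const_smul t : Continuous fun x : Ed d => t • x)).continuousOn.integrableOn_compact
                (isCompact_closedBall (0:Ed d) (2*R))).mono_set hΩB)
              hKsmul.integrableOn hmeas hle
        _ ≤ ∫ x, K (t • x) :=
            setIntegral_le_integral hKsmul (Filter.Eventually.of_forall fun x => hKnn _)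
    have hcs : (∫ x, K (t • x)) = |((t:ℝ) ^ (Module.finrank ℝ (Ed d)))⁻¹| • ∫ y, K y :=
      Measure.integral_comp_smul volume K t
    have hKI : (∫ y, K y) = I := by
      rw [hK, MeasureTheory.integral_indicator (hmeas.diff measurableSet_ball)]
      rw [hI]
      apply setIntegral_congr_set
      have hsub1 : (Ω \ ball (0:Ed d) (R/2)) \ (Ω \ closedBall (0:Ed d) (R/2))
          ⊆ sphere (0:Ed d) (R/2) := by
        intro y hy
        obtain ⟨⟨hyΩ, hyb⟩, hyn⟩ := hy
        have hyc : y ∈ closedBall (0:Ed d) (R/2) := by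
          by_contra hc; exact hyn ⟨hyΩ, hc⟩
        rw [mem_closedBall, dist_zero_right] at hyc
        rw [mem_ball, dist_zero_right, not_lt] at hyb
        rw [mem_sphere, dist_zero_right]
        linarith
      rw [MeasureTheory.ae_eq_set]
      constructor
      · exact measure_mono_null hsub1 (Measure.addHaar_sphere _ _ _)
      · have hempty : (Ω \ closedBall (0:Ed d) (R/2)) \ (Ω \ ball (0:Ed d) (R/2)) = ∅ := by
          apply Set.eq_empty_iff_forall_notMem.mpr
          rintro y ⟨⟨hyΩ, hyc⟩, hyn⟩
          exact hyn ⟨hyΩ, fun hb => hyc (ball_subset_closedBall hb)⟩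
        rw [hempty]
        simp
    have habs : |((t:ℝ) ^ (Module.finrank ℝ (Ed d)))⁻¹| ≤ 4 ^ d := by
      rw [finrank_euclideanSpace_fin, abs_of_pos (by positivity)]
      rw [inv_le_comm₀ (by positivity) (by positivity)]
      calc ((4:ℝ) ^ d)⁻¹ = (1/4) ^ d := by
            rw [one_div, inv_pow]
        _ ≤ t ^ d := pow_le_pow_left₀ (by norm_num) htl d
    calc ∫ x in Ω, F (t • x) ≤ ∫ x, K (t • x) := hcalc
      _ = |((t:ℝ) ^ (Module.finrank ℝ (Ed d)))⁻¹| • ∫ y, K y := hcs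
      _ = |((t:ℝ) ^ (Module.finrank ℝ (Ed d)))⁻¹| * I := by rw [smul_eq_mul, hKI]
      _ ≤ 4 ^ d * I := mul_le_mul_of_nonneg_right habs hInn
  -- integrate the inner bound
  have hμtfin : μt Set.univ = ENNReal.ofReal (3/4) := by
    rw [hμt, Measure.restrict_apply_univ, Real.volume_Icc]
    norm_num
  have hH : (∫ t, (∫ x in Ω, F (t • x)) ∂μt) ≤ 4 ^ d * I := by
    have hconst : Integrable (fun _ : ℝ => 4 ^ d * I) μt := by
      apply integrable_const
    calc (∫ t, (∫ x in Ω, F (t • x)) ∂μt) ≤ ∫ _t, 4 ^ d * I ∂μt := by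
          rw [hμt]
          exact setIntegral_mono_on hinner_int hconst measurableSet_Icc hG
      _ = (μt Set.univ).toReal * (4 ^ d * I) := by
          rw [integral_const, smul_eq_mul, measureReal_def]
      _ ≤ 4 ^ d * I := by
          rw [hμtfin]
          rw [ENNReal.toReal_ofReal (by norm_num)]
          nlinarith [hInn, pow_pos (show (0:ℝ) < 4 by norm_num) d]
  -- final chain
  calc ∫ x in Ω, w x ^ 2
      ≤ ∫ x in Ω, (2*R)^2 * ∫ t in Set.Icc (1/4:ℝ) 1, F (t • x) := hE
    _ = (2*R)^2 * ∫ x in Ω, ∫ t, F (t • x) ∂μt := by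
        rw [integral_const_mul]
    _ = (2*R)^2 * ∫ t, (∫ x in Ω, F (t • x)) ∂μt := by rw [hswap]
    _ ≤ (2*R)^2 * (4 ^ d * I) := by
        apply mul_le_mul_of_nonneg_left hH (by positivity)
    _ = 4 ^ d * (2 * R) ^ 2 * I := by ring

/-- Truncation-operator estimate (3.14) of the paper (a scaled Poincaré-type
inequality): for convex open `Ω` with `B_R ⊆ Ω ⊆ B_{2R}`,
`‖v − v_R − a‖_{L²(Ω)} ≤ C R ‖∇v − ∇v_R‖_{L²(Ω ∖ B_{R/2})}`, with `C`
depending only on the dimension `d` and on `c₀`. -/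
theorem trunc_poincare_estimate (d : ℕ) (hd : 1 ≤ d) (c₀ : ℝ) (hc₀ : 0 < c₀) :
    ∃ C : ℝ, 0 < C ∧
      ∀ (R : ℝ), 0 < R →
      ∀ (η : Ed d → ℝ), IsCutoff d c₀ R η →
      ∀ (Ω : Set (Ed d)), Convex ℝ Ω → IsOpen Ω →
        closedBall (0 : Ed d) R ⊆ Ω → Ω ⊆ closedBall (0 : Ed d) (2 * R) →
      ∀ (v : Ed d → ℝ), ContDiff ℝ 1 v →
        Integrable (fun x => ‖gradient v x‖ ^ 2) →
        l2On Ω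
            (fun x => v x - truncFun η v (truncAvg d R v) x - truncAvg d R v)
          ≤ C * R * l2On (Ω \ closedBall (0 : Ed d) (R / 2))
              (fun x => gradient v x - gradient (truncFun η v (truncAvg d R v)) x) := by
  refine ⟨2 ^ (d + 1), by positivity, ?_⟩
  intro R hR η hcut Ω hconv hopen hBΩ hΩB v hv _hint
  set a : ℝ := truncAvg d R v with ha
  set vR : Ed d → ℝ := truncFun η v a with hvR
  have hvRsmooth : ContDiff ℝ 1 vR := hcut.smooth.mul (hv.sub contDiff_const)
  set w : Ed d → ℝ := fun x => v x - vR x - a with hw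
  have hwsmooth : ContDiff ℝ 1 w := (hv.sub hvRsmooth).sub contDiff_const
  have hw0 : ∀ x ∈ closedBall (0 : Ed d) (R / 2), w x = 0 := by
    intro x hx
    have h1 : η x = 1 := hcut.eq_one x hx
    show v x - η x * (v x - a) - a = 0
    rw [h1]; ring
  have h0Ω : (0 : Ed d) ∈ Ω := hBΩ (mem_closedBall_self hR.le)
  -- gradient difference = fderiv of w
  have hgradnorm : ∀ x, ‖gradient v x - gradient vR x‖ = ‖fderiv ℝ w x‖ := by
    intro x
    have hv' : DifferentiableAt ℝ v x := hv.differentiable one_ne_zero x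
    have hvR' : DifferentiableAt ℝ vR x := hvRsmooth.differentiable one_ne_zero x
    have hfd : fderiv ℝ w x = fderiv ℝ v x - fderiv ℝ vR x := by
      have h2 : w = fun y => (fun z => v z - vR z) y - a := rfl
      rw [h2, fderiv_sub_const, fderiv_fun_sub hv' hvR']
    rw [gradient, gradient, ← map_sub, ← hfd]
    exact (InnerProductSpace.toDual ℝ (Ed d)).symm.norm_map (fderiv ℝ w x)
  have hkey := key_poincare d hd hR hconv hopen.measurableSet h0Ω hΩB hwsmooth hw0
  -- rewrite the L² norms
  have hL : l2On Ω (fun x => v x - truncFun η v (truncAvg d R v) x - truncAvg d R v)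
      = Real.sqrt (∫ x in Ω, w x ^ 2) := by
    rw [l2On]
    congr 1
    apply integral_congr_ae
    refine Filter.Eventually.of_forall fun x => ?_
    show ‖v x - truncFun η v (truncAvg d R v) x - truncAvg d R v‖ ^ 2 = w x ^ 2
    rw [Real.norm_eq_abs, sq_abs]
  have hRk : l2On (Ω \ closedBall (0 : Ed d) (R / 2))
      (fun x => gradient v x - gradient (truncFun η v (truncAvg d R v)) x)
      = Real.sqrt (∫ y in Ω \ closedBall (0 : Ed d) (R / 2), ‖fderiv ℝ w y‖ ^ 2) := by
    rw [l2On]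
    congr 1
    apply integral_congr_ae
    refine Filter.Eventually.of_forall fun x => ?_
    show ‖gradient v x - gradient (truncFun η v (truncAvg d R v)) x‖ ^ 2 = ‖fderiv ℝ w x‖ ^ 2
    rw [← hgradnorm x]
  rw [hL, hRk]
  have hCR : (0:ℝ) ≤ 2 ^ (d+1) * R := by positivity
  have h2 : ∫ x in Ω, w x ^ 2
      ≤ (2 ^ (d+1) * R) ^ 2 * ∫ y in Ω \ closedBall (0 : Ed d) (R / 2), ‖fderiv ℝ w y‖ ^ 2 := by
    have : (2 ^ (d+1) * R : ℝ) ^ 2 = 4 ^ d * (2 * R) ^ 2 := by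
      rw [mul_pow, mul_pow]
      have : ((2:ℝ) ^ (d+1)) ^ 2 = 4 ^ d * 2 ^ 2 := by
        rw [← pow_mul]
        have h4 : (4:ℝ) = 2 ^ 2 := by norm_num
        rw [h4, ← pow_mul]
        ring_nf
      rw [this]; ring
    rw [this]
    exact hkey
  calc Real.sqrt (∫ x in Ω, w x ^ 2)
      ≤ Real.sqrt ((2 ^ (d+1) * R) ^ 2
          * ∫ y in Ω \ closedBall (0 : Ed d) (R / 2), ‖fderiv ℝ w y‖ ^ 2) :=
        Real.sqrt_le_sqrt h2
    _ = 2 ^ (d+1) * R * Real.sqrt (∫ y in Ω \ closedBall (0 : Ed d) (R / 2), ‖fderiv ℝ w y‖ ^ 2) := by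
        rw [Real.sqrt_mul (sq_nonneg _), Real.sqrt_sq hCR]
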